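/- Let G be a group with finite generating set X such that G is not minimally almost convex with respect to X. Then for arbitrarily large n, the Cayley graph Γ(G,X) contains an isometrically embedded circle (closed loop) of length at least 2n + 2, namely the loop formed by a geodesic-witnessing path of length 2n inside B(n) together with the length-2 path between its endpoints. -/

import Mathlib

variable {G : Type*} [Group G]

/-- Word length of `g` with respect to the generating set `X` (generators and inverses allowed). -/
noncomputable def wLen (X : Set G) (g : G) : ℕ :=
  sInf {n | ∃ w : List G, (∀ s ∈ w, s ∈ X ∨ s⁻¹ ∈ X) ∧ w.prod = g ∧ w.length = n}

/-- Word metric associated to `X`. -/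
noncomputable def wDist (X : Set G) (g h : G) : ℕ := wLen X (g⁻¹ * h)

/-- One step in the Cayley graph of `(G, X)`. -/
def IsStep (X : Set G) (a b : G) : Prop := ∃ s, (s ∈ X ∨ s⁻¹ ∈ X) ∧ b = a * s

/-- A (nonempty) edge path in the Cayley graph, recorded as its list of vertices. -/
def IsPath (X : Set G) (p : List G) : Prop := p ≠ [] ∧ List.Chain' (IsStep X) p

/-- The path stays in the ball of radius `n` about the identity. -/
def InBall (X : Set G) (n : ℕ) (p : List G) : Prop := ∀ a ∈ p, wLen X a ≤ n

/-- Length (number of edges) of a path given by its vertex list. -/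
def pLen (p : List G) : ℕ := p.length - 1

lemma prod_reverse_map_inv (l : List G) : (l.reverse.map (·⁻¹)).prod = l.prod⁻¹ := by
  rw [List.map_reverse, ← List.prod_inv_reverse]

lemma exists_word (X : Set G) (hXgen : Subgroup.closure X = ⊤) (g : G) :
    ∃ w : List G, (∀ s ∈ w, s ∈ X ∨ s⁻¹ ∈ X) ∧ w.prod = g := by
  have hg : g ∈ Subgroup.closure X := by rw [hXgen]; trivial
  induction hg using Subgroup.closure_induction with
  | mem x hx => exact ⟨[x], by simp [hx], by simp⟩
  | one => exact ⟨[], by simp, by simp⟩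
  | mul x y hx hy ihx ihy =>
    obtain ⟨w1, h1, e1⟩ := ihx
    obtain ⟨w2, h2, e2⟩ := ihy
    refine ⟨w1 ++ w2, ?_, by simp [e1, e2]⟩
    intro s hs
    rcases List.mem_append.mp hs with h | h
    · exact h1 s h
    · exact h2 s h
  | inv x hx ih =>
    obtain ⟨w, h, e⟩ := ih
    refine ⟨w.reverse.map (·⁻¹), ?_, by rw [prod_reverse_map_inv, e]⟩
    intro s hs
    simp only [List.mem_map, List.mem_reverse] at hs
    obtain ⟨t, ht, rfl⟩ := hs
    rcases h t ht with h' | h'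
    · right; rwa [inv_inv]
    · left; exact h'

lemma wLen_le (X : Set G) {w : List G} (hw : ∀ s ∈ w, s ∈ X ∨ s⁻¹ ∈ X) :
    wLen X w.prod ≤ w.length := Nat.sInf_le ⟨w, hw, rfl, rfl⟩

lemma wLen_spec (X : Set G) (hXgen : Subgroup.closure X = ⊤) (g : G) :
    ∃ w : List G, (∀ s ∈ w, s ∈ X ∨ s⁻¹ ∈ X) ∧ w.prod = g ∧ w.length = wLen X g := by
  have hne : {n | ∃ w : List G, (∀ s ∈ w, s ∈ X ∨ s⁻¹ ∈ X) ∧ w.prod = g ∧ w.length = n}.Nonempty := by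
    obtain ⟨w, hw, hp⟩ := exists_word X hXgen g
    exact ⟨w.length, w, hw, hp, rfl⟩
  exact Nat.sInf_mem hne

lemma wLen_one (X : Set G) : wLen X (1 : G) = 0 :=
  Nat.le_zero.mp (by simpa using wLen_le X (w := []) (by simp))

lemma wLen_mul_le (X : Set G) (hXgen : Subgroup.closure X = ⊤) (g h : G) :
    wLen X (g * h) ≤ wLen X g + wLen X h := by
  obtain ⟨w1, h1, e1, l1⟩ := wLen_spec X hXgen g
  obtain ⟨w2, h2, e2, l2⟩ := wLen_spec X hXgen h
  have hw : ∀ s ∈ w1 ++ w2, s ∈ X ∨ s⁻¹ ∈ X := by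
    intro s hs
    rcases List.mem_append.mp hs with h | h
    · exact h1 s h
    · exact h2 s h
  have := wLen_le X hw
  simpa [e1, e2, l1, l2] using this

lemma wLen_inv_le (X : Set G) (hXgen : Subgroup.closure X = ⊤) (g : G) :
    wLen X g⁻¹ ≤ wLen X g := by
  obtain ⟨w, hw, e, l⟩ := wLen_spec X hXgen g
  have hw' : ∀ s ∈ w.reverse.map (·⁻¹), s ∈ X ∨ s⁻¹ ∈ X := by
    intro s hs
    simp only [List.mem_map, List.mem_reverse] at hs
    obtain ⟨t, ht, rfl⟩ := hs
    rcases hw t ht with h' | h'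
    · right; rwa [inv_inv]
    · left; exact h'
  have := wLen_le X hw'
  rw [prod_reverse_map_inv, e] at this
  simpa [l] using this

lemma wLen_inv (X : Set G) (hXgen : Subgroup.closure X = ⊤) (g : G) :
    wLen X g⁻¹ = wLen X g :=
  le_antisymm (wLen_inv_le X hXgen g) (by simpa using wLen_inv_le X hXgen g⁻¹)

lemma wDist_self (X : Set G) (g : G) : wDist X g g = 0 := by
  simp [wDist, wLen_one]

lemma wDist_symm (X : Set G) (hXgen : Subgroup.closure X = ⊤) (g h : G) :
    wDist X g h = wDist X h g := by
  unfold wDist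
  rw [← wLen_inv X hXgen (g⁻¹ * h)]
  simp [mul_inv_rev]

lemma wDist_triangle (X : Set G) (hXgen : Subgroup.closure X = ⊤) (g h k : G) :
    wDist X g k ≤ wDist X g h + wDist X h k := by
  unfold wDist
  have := wLen_mul_le X hXgen (g⁻¹ * h) (h⁻¹ * k)
  simpa [mul_assoc] using this

lemma wLen_le_add (X : Set G) (hXgen : Subgroup.closure X = ⊤) (g h : G) :
    wLen X h ≤ wLen X g + wDist X g h := by
  have := wLen_mul_le X hXgen g (g⁻¹ * h)
  simpa [wDist] using this

lemma wDist_le_one (X : Set G) {g h : G} (hs : IsStep X g h) : wDist X g h ≤ 1 := by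
  obtain ⟨s, hgen, rfl⟩ := hs
  have := wLen_le X (w := [s]) (by simpa using hgen)
  simpa [wDist] using this

/-- Path from `g` spelled by the word `l`, as its list of vertices. -/
def pathOf (g : G) (l : List G) : List G :=
  (List.range (l.length + 1)).map (fun k => g * (l.take k).prod)

lemma pathOf_head (g : G) (l : List G) : (pathOf g l).head? = some g := by
  unfold pathOf
  rw [List.range_succ_eq_map]
  simp

lemma pathOf_last (g : G) (l : List G) : (pathOf g l).getLast? = some (g * l.prod) := by
  unfold pathOf
  rw [List.getLast?_map, List.range_succ]
  simp

lemma pathOf_pLen (g : G) (l : List G) : pLen (pathOf g l) = l.length := by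
  simp [pathOf, pLen]

lemma take_succ_prod {l : List G} {k : ℕ} (hk : k < l.length) :
    (l.take (k + 1)).prod = (l.take k).prod * l[k] := by
  exact List.prod_take_succ l k hk

lemma pathOf_isPath (X : Set G) (g : G) {l : List G} (hl : ∀ s ∈ l, s ∈ X ∨ s⁻¹ ∈ X) :
    IsPath X (pathOf g l) := by
  constructor
  · simp [pathOf]
  · unfold pathOf
    rw [List.Chain', List.isChain_map, List.isChain_range_succ]
    intro k hk
    refine ⟨l[k], hl _ (l.getElem_mem hk), ?_⟩
    rw [take_succ_prod hk, mul_assoc]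

lemma pathOf_mem {g z : G} {l : List G} (hz : z ∈ pathOf g l) :
    ∃ k, k ≤ l.length ∧ z = g * (l.take k).prod := by
  unfold pathOf at hz
  simp only [List.mem_map, List.mem_range] at hz
  obtain ⟨k, hk, rfl⟩ := hz
  exact ⟨k, by omega, rfl⟩

lemma wLen_prod_le (X : Set G) {l : List G} (hl : ∀ s ∈ l, s ∈ X ∨ s⁻¹ ∈ X) :
    wLen X l.prod ≤ l.length := wLen_le X hl

lemma anchor (X : Set G) (hXgen : Subgroup.closure X = ⊤) (g : G) {l : List G}
    (hl : ∀ s ∈ l, s ∈ X ∨ s⁻¹ ∈ X) {j k : ℕ} (hjk : j ≤ k) (hk : k ≤ l.length) :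
    wLen X (g * (l.take k).prod) ≤ wLen X (g * (l.take j).prod) + (k - j) ∧
    wLen X (g * (l.take j).prod) ≤ wLen X (g * (l.take k).prod) + (k - j) := by
  set seg := (l.take k).drop j with hseg
  have hsl : seg.length = k - j := by
    rw [hseg, List.length_drop, List.length_take]
    omega
  have hsegmem : ∀ s ∈ seg, s ∈ X ∨ s⁻¹ ∈ X := by
    intro s hs
    exact hl s (List.mem_of_mem_take (List.mem_of_mem_drop hs))
  have hdecomp : (l.take j).prod * seg.prod = (l.take k).prod := by
    rw [hseg, ← List.prod_append]
    congr 1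
    have : List.take j l = List.take j (List.take k l) := by
      rw [List.take_take, min_eq_left hjk]
    rw [this, List.take_append_drop]
  constructor
  · calc wLen X (g * (l.take k).prod) = wLen X ((g * (l.take j).prod) * seg.prod) := by
          rw [mul_assoc, hdecomp]
      _ ≤ wLen X (g * (l.take j).prod) + wLen X seg.prod := wLen_mul_le X hXgen _ _
      _ ≤ _ := by have := wLen_prod_le X hsegmem; omega
  · calc wLen X (g * (l.take j).prod) = wLen X ((g * (l.take k).prod) * seg.prod⁻¹) := by
          rw [mul_assoc, ← hdecomp]; group
      _ ≤ wLen X (g * (l.take k).prod) + wLen X seg.prod⁻¹ := wLen_mul_le X hXgen _ _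
      _ ≤ _ := by
          have h1 := wLen_prod_le X hsegmem
          have h2 := wLen_inv X hXgen seg.prod
          omega

/-- Vertex `k` of the candidate cycle. -/
def cyc (n : ℕ) (u v : List G) (w : G) (k : ℕ) : G :=
  if k ≤ n then (u.take k).prod else if k = n + 1 then w else (v.take (2*n+2-k)).prod


/-- If `(G, X)` is not minimally almost convex, then for arbitrarily large `n` the Cayley
graph contains an isometrically embedded cycle of length at least `2n + 2`. -/
theorem stmt11 (X : Set G) (hXfin : X.Finite) (hXgen : Subgroup.closure X = ⊤)
    (hnotmac : ∀ n₀ : ℕ, ∃ n, n₀ ≤ n ∧ ∃ a b : G,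
      wLen X a ≤ n ∧ wLen X b ≤ n ∧ wDist X a b = 2 ∧
      ∀ p : List G, IsPath X p → p.head? = some a → p.getLast? = some b →
        InBall X n p → 2 * n ≤ pLen p) :
    ∀ n₀ : ℕ, ∃ n, n₀ ≤ n ∧ ∃ m : ℕ, 2 * n + 2 ≤ m ∧ ∃ c : ZMod m → G,
      (∀ i : ZMod m, IsStep X (c i) (c (i + 1))) ∧
      (∀ i j : ZMod m, wDist X (c i) (c j) = min (i - j).val (j - i).val) := by
  intro n₀
  obtain ⟨n, hn, a, b, ha, hb, hd, H⟩ := hnotmac (max 2 n₀)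
  have hn2 : 2 ≤ n := le_trans (le_max_left _ _) hn
  refine ⟨n, le_trans (le_max_right _ _) hn, 2*n+2, le_refl _, ?_⟩
  obtain ⟨u, hu, hua, hulen⟩ := wLen_spec X hXgen a
  obtain ⟨v, hv, hvb, hvlen⟩ := wLen_spec X hXgen b
  obtain ⟨s, hs, hsprod, hslen⟩ := wLen_spec X hXgen (a⁻¹ * b)
  have hslen2 : s.length = 2 := hslen.trans hd
  obtain ⟨s₁, s₂, rfl⟩ := List.length_eq_two.mp hslen2
  have hs₁ : s₁ ∈ X ∨ s₁⁻¹ ∈ X := hs s₁ (by simp)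
  have hs₂ : s₂ ∈ X ∨ s₂⁻¹ ∈ X := hs s₂ (by simp)
  have hb' : b = a * s₁ * s₂ := by
    have : a * (a⁻¹ * b) = a * ([s₁, s₂]).prod := by rw [hsprod]
    simpa [mul_assoc] using this
  -- Step 1 : wLen a = n and wLen b = n
  have hW0gens : ∀ t ∈ (u.reverse.map (·⁻¹)) ++ v, t ∈ X ∨ t⁻¹ ∈ X := by
    intro t ht
    rcases List.mem_append.mp ht with h | h
    · simp only [List.mem_map, List.mem_reverse] at h
      obtain ⟨t', ht', rfl⟩ := h
      rcases hu t' ht' with h' | h'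
      · right; rwa [inv_inv]
      · left; exact h'
    · exact hv t h
  have hW0take : ((u.reverse.map (·⁻¹)) ++ v).take u.length = u.reverse.map (·⁻¹) := by
    have : u.length = (u.reverse.map (·⁻¹)).length := by simp
    rw [this, List.take_left]
  have hW0prod : a * ((u.reverse.map (·⁻¹)) ++ v).prod = b := by
    rw [List.prod_append, prod_reverse_map_inv, hua, hvb, ← mul_assoc]
    simp
  have hW0mid : a * (((u.reverse.map (·⁻¹)) ++ v).take u.length).prod = 1 := by
    rw [hW0take, prod_reverse_map_inv, hua]
    simp
  have hsum : 2 * n ≤ u.length + v.length := by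
    have h2n := H (pathOf a ((u.reverse.map (·⁻¹)) ++ v)) (pathOf_isPath X a hW0gens)
      (pathOf_head a _) (by rw [pathOf_last, hW0prod]) ?_
    · rw [pathOf_pLen] at h2n
      simpa using h2n
    · intro z hz
      obtain ⟨k, hk, rfl⟩ := pathOf_mem hz
      have hlen : ((u.reverse.map (·⁻¹)) ++ v).length = u.length + v.length := by simp
      rcases le_or_gt k u.length with h | h
      · have := (anchor X hXgen a hW0gens h (by omega)).2
        rw [hW0mid, wLen_one] at this
        have hun : u.length ≤ n := by rw [hulen]; exact ha
        omega
      · have := (anchor X hXgen a hW0gens (le_of_lt h) (by omega)).1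
        rw [hW0mid, wLen_one] at this
        have hvn : v.length ≤ n := by rw [hvlen]; exact hb
        omega
  have hwa : wLen X a = n := by omega
  have hwb : wLen X b = n := by omega
  have hulen' : u.length = n := by omega
  have hvlen' : v.length = n := by omega
  -- Step 2/3 : wLen (a*s₁) = n + 1
  have hww : wLen X (a * s₁) = n + 1 := by
    have hle : wLen X (a * s₁) ≤ n + 1 := by
      have h1 : wLen X s₁ ≤ 1 := by simpa using wLen_le X (w := [s₁]) (by simpa using hs₁)
      have := wLen_mul_le X hXgen a s₁
      omega
    have hgt : ¬ wLen X (a * s₁) ≤ n := by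
      intro hcon
      have h2n := H (pathOf a [s₁, s₂]) (pathOf_isPath X a (by simpa using hs))
        (pathOf_head a _) (by rw [pathOf_last]; congr 1; rw [hb']; simp [mul_assoc]) ?_
      · rw [pathOf_pLen] at h2n
        simp at h2n
        omega
      · intro z hz
        obtain ⟨k, hk, rfl⟩ := pathOf_mem hz
        simp only [List.length_cons, List.length_nil] at hk
        interval_cases k
        · simpa [hwa] using le_refl n
        · simpa using hcon
        · rw [show ([s₁, s₂]).take 2 = [s₁, s₂] by rfl]
          have : a * ([s₁, s₂]).prod = b := by rw [hb']; simp [mul_assoc]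
          rw [this, hwb]
    omega
  -- the cycle vertices
  set f : ℕ → G := cyc n u v (a * s₁) with hfdef
  have hf_low : ∀ k, k ≤ n → f k = (u.take k).prod := by
    intro k hk; simp [hfdef, cyc, hk]
  have hf_mid : f (n+1) = a * s₁ := by simp [hfdef, cyc]
  have hf_high : ∀ k, n + 2 ≤ k → f k = (v.take (2*n+2-k)).prod := by
    intro k hk
    have h1 : ¬ k ≤ n := by omega
    have h2 : k ≠ n + 1 := by omega
    simp [hfdef, cyc, h1, h2]
  have hf0 : f 0 = 1 := by rw [hf_low 0 (by omega)]; simp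
  have hfn : f n = a := by rw [hf_low n le_rfl, ← hulen', List.take_length, hua]
  have hfn2 : f (n+2) = b := by
    rw [hf_high (n+2) le_rfl, show 2*n+2-(n+2) = n by omega, ← hulen']
    rw [show u.length = v.length by omega, List.take_length, hvb]
  -- exact word lengths of the vertices
  have hlow_len : ∀ k, k ≤ n → wLen X (f k) = k := by
    intro k hk
    rw [hf_low k hk]
    have hle : wLen X (u.take k).prod ≤ k := by
      have := wLen_le X (w := u.take k) (fun t ht => hu t (List.mem_of_mem_take ht))
      rwa [List.length_take, hulen', min_eq_left hk] at this
    have hge : k ≤ wLen X (u.take k).prod := by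
      have hdec : (u.take k).prod * (u.drop k).prod = a := by
        rw [← List.prod_append, List.take_append_drop, hua]
      have h1 : wLen X a ≤ wLen X (u.take k).prod + wLen X (u.drop k).prod := by
        rw [← hdec]; exact wLen_mul_le X hXgen _ _
      have h2 : wLen X (u.drop k).prod ≤ n - k := by
        have := wLen_le X (w := u.drop k) (fun t ht => hu t (List.mem_of_mem_drop ht))
        rwa [List.length_drop, hulen'] at this
      omega
    omega
  have hhigh_len : ∀ k, n + 2 ≤ k → k ≤ 2*n+2 → wLen X (f k) = 2*n+2-k := by
    intro k hk1 hk2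
    rw [hf_high k hk1]
    set r := 2*n+2-k with hr
    have hrn : r ≤ n := by omega
    have hle : wLen X (v.take r).prod ≤ r := by
      have := wLen_le X (w := v.take r) (fun t ht => hv t (List.mem_of_mem_take ht))
      rwa [List.length_take, hvlen', min_eq_left hrn] at this
    have hge : r ≤ wLen X (v.take r).prod := by
      have hdec : (v.take r).prod * (v.drop r).prod = b := by
        rw [← List.prod_append, List.take_append_drop, hvb]
      have h1 : wLen X b ≤ wLen X (v.take r).prod + wLen X (v.drop r).prod := by
        rw [← hdec]; exact wLen_mul_le X hXgen _ _
      have h2 : wLen X (v.drop r).prod ≤ n - r := by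
        have := wLen_le X (w := v.drop r) (fun t ht => hv t (List.mem_of_mem_drop ht))
        rwa [List.length_drop, hvlen'] at this
      omega
    omega
  -- steps along the cycle
  have hstep : ∀ k, k < 2*n+2 → IsStep X (f k) (f ((k+1) % (2*n+2))) := by
    intro k hk
    rcases lt_trichotomy k n with h | h | h
    · -- k < n
      rw [Nat.mod_eq_of_lt (by omega), hf_low k (by omega), hf_low (k+1) (by omega)]
      refine ⟨u[k]'(by omega), hu _ (List.getElem_mem _), ?_⟩
      exact List.prod_take_succ u k (by omega)
    · -- k = n
      subst h
      rw [Nat.mod_eq_of_lt (by omega), hfn, hf_mid]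
      exact ⟨s₁, hs₁, rfl⟩
    · rcases eq_or_lt_of_le (show n + 1 ≤ k by omega) with h' | h'
      · -- k = n+1
        rw [Nat.mod_eq_of_lt (by omega), ← h', hf_mid, show n+1+1 = n+2 by omega, hfn2]
        exact ⟨s₂, hs₂, by rw [hb']⟩
      · -- n+2 ≤ k ≤ 2n+1
        have hk1 : n + 2 ≤ k := by omega
        have hk2 : k ≤ 2*n+1 := by omega
        set r := 2*n+1-k with hr
        have hrv : r < v.length := by rw [hvlen']; omega
        have htgt : f ((k+1) % (2*n+2)) = (v.take r).prod := by
          rcases eq_or_lt_of_le hk2 with h'' | h''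
          · subst h''
            rw [show (2*n+1+1) % (2*n+2) = 0 from Nat.mod_self _, hf0, hr]
            simp
          · rw [Nat.mod_eq_of_lt (by omega), hf_high (k+1) (by omega),
              show 2*n+2-(k+1) = r from by omega]
        have hsrc : f k = (v.take r).prod * v[r] := by
          rw [hf_high k hk1, show 2*n+2-k = r + 1 by omega]
          exact List.prod_take_succ v r hrv
        rw [htgt]
        refine ⟨(v[r])⁻¹, ?_, by rw [hsrc]; group⟩
        rcases hv _ (List.getElem_mem hrv) with h3 | h3
        · right; rwa [inv_inv]
        · left; exact h3
  -- the key lower bound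
  have key : ∀ p q : ℕ, p ≤ q → q ≤ 2*n+1 →
      min (q - p) (2*n+2 - (q - p)) ≤ wDist X (f p) (f q) := by
    intro p q hpq hq
    rcases eq_or_lt_of_le hpq with rfl | hlt
    · simp [wDist_self]
    have wlb1 := wLen_le_add X hXgen (f p) (f q)
    have wlb2 := wLen_le_add X hXgen (f q) (f p)
    have hsymm := wDist_symm X hXgen (f p) (f q)
    rcases le_or_gt q n with hqn | hqn
    · have h1 := hlow_len p (by omega)
      have h2 := hlow_len q hqn
      exact le_trans (min_le_left _ _) (by omega)
    rcases le_or_gt q (n+1) with hqn1 | hqn1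
    · have hq1 : q = n + 1 := by omega
      have h1 := hlow_len p (by omega)
      have h2 : wLen X (f q) = n + 1 := by rw [hq1, hf_mid]; exact hww
      exact le_trans (min_le_left _ _) (by omega)
    rcases le_or_gt (n+1) p with hpn | hpn
    · rcases eq_or_lt_of_le hpn with hp1 | hp1
      · have h1 : wLen X (f p) = n + 1 := by rw [← hp1, hf_mid]; exact hww
        have h2 := hhigh_len q (by omega) (by omega)
        exact le_trans (min_le_left _ _) (by omega)
      · have h1 := hhigh_len p (by omega) (by omega)
        have h2 := hhigh_len q (by omega) (by omega)
        exact le_trans (min_le_left _ _) (by omega)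
    -- hard case : p ≤ n and n + 2 ≤ q ≤ 2n + 1
    have hpn' : p ≤ n := by omega
    have hqn' : n + 2 ≤ q := by omega
    by_contra hcon
    push_neg at hcon
    set L := wDist X (f p) (f q) with hLdef
    have hL1 : L < q - p := lt_of_lt_of_le hcon (min_le_left _ _)
    have hL2 : L < 2*n+2 - (q - p) := lt_of_lt_of_le hcon (min_le_right _ _)
    obtain ⟨gd, hgd, hgdprod, hgdlen⟩ := wLen_spec X hXgen ((f p)⁻¹ * (f q))
    have hgdL : gd.length = L := hgdlen
    set first : List G := (u.drop p).reverse.map (·⁻¹) with hfirst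
    set tail : List G := v.drop (2*n+2-q) with htail
    have hflen : first.length = n - p := by simp [hfirst, hulen']
    have htlen : tail.length = q - (n + 2) := by simp [htail, hvlen']; omega
    set W : List G := first ++ (gd ++ tail) with hW
    have hWlen : W.length = (n - p) + (L + (q - (n+2))) := by
      simp [hW, hflen, htlen, hgdL]
    have hWgens : ∀ t ∈ W, t ∈ X ∨ t⁻¹ ∈ X := by
      intro t ht
      rcases List.mem_append.mp ht with h | h
      · simp only [hfirst, List.mem_map, List.mem_reverse] at h
        obtain ⟨t', ht', rfl⟩ := h
        rcases hu t' (List.mem_of_mem_drop ht') with h' | h'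
        · right; rwa [inv_inv]
        · left; exact h'
      · rcases List.mem_append.mp h with h | h
        · exact hgd t h
        · exact hv t (List.mem_of_mem_drop h)
    have hvA : a * (W.take (n - p)).prod = f p := by
      have h1 : W.take (n - p) = first := by
        rw [hW, show n - p = first.length from hflen.symm, List.take_left]
      rw [h1, hfirst, prod_reverse_map_inv]
      have h2 : (u.take p).prod * (u.drop p).prod = a := by
        rw [← List.prod_append, List.take_append_drop, hua]
      rw [hf_low p hpn', ← h2]
      group
    have hvB : a * (W.take ((n - p) + L)).prod = f q := by
      have h1 : W.take ((n - p) + L) = first ++ gd := by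
        rw [hW, List.take_append]
        rw [List.take_of_length_le (by omega), hflen,
          show (n - p) + L - (n - p) = L from by omega,
          show gd ++ tail = gd ++ tail from rfl,
          List.take_append, List.take_of_length_le (by omega),
          show L - gd.length = 0 from by omega]
        simp
      rw [h1, List.prod_append, ← mul_assoc]
      have h2 : a * first.prod = f p := by
        have := hvA
        rwa [hW, show n - p = first.length from hflen.symm, List.take_left] at this
      rw [h2, hgdprod]
      group
    have hlastW : a * W.prod = b := by
      have h2 : a * first.prod = f p := by
        have := hvA
        rwa [hW, show n - p = first.length from hflen.symm, List.take_left] at this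
      rw [hW, List.prod_append, List.prod_append, ← mul_assoc, ← mul_assoc, h2, hgdprod,
        show f p * ((f p)⁻¹ * f q) = f q from by group]
      rw [hf_high q hqn', htail, ← List.prod_append, List.take_append_drop, hvb]
    have h2n := H (pathOf a W) (pathOf_isPath X a hWgens) (pathOf_head a _)
      (by rw [pathOf_last, hlastW]) ?_
    · rw [pathOf_pLen, hWlen] at h2n
      omega
    · intro z hz
      obtain ⟨k, hk, rfl⟩ := pathOf_mem hz
      rw [hWlen] at hk
      have hwfp : wLen X (f p) = p := hlow_len p hpn'
      have hwfq : wLen X (f q) = 2*n+2-q := hhigh_len q hqn' (by omega)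
      rcases le_or_gt k (n - p) with hkA | hkA
      · have := (anchor X hXgen a hWgens hkA (by omega)).2
        rw [hvA, hwfp] at this
        omega
      rcases le_or_gt k ((n - p) + L) with hkB | hkB
      · have h1 := (anchor X hXgen a hWgens (le_of_lt hkA) (by omega : k ≤ W.length)).1
        rw [hvA, hwfp] at h1
        have h2 := (anchor X hXgen a hWgens hkB (by omega : (n-p) + L ≤ W.length)).2
        rw [hvB, hwfq] at h2
        omega
      · have := (anchor X hXgen a hWgens (le_of_lt hkB) (by omega : k ≤ W.length)).1
        rw [hvB, hwfq] at this
        omega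

  haveI : NeZero (2*n+2) := ⟨by omega⟩
  haveI : Fact (1 < 2*n+2) := ⟨by omega⟩
  have hcast : ∀ i : ZMod (2*n+2), ((i.val : ℕ) : ZMod (2*n+2)) = i :=
    fun i => ZMod.natCast_rightInverse i
  have hstep' : ∀ i : ZMod (2*n+2), IsStep X (f i.val) (f (i+1).val) := by
    intro i
    have h1 : (i + 1).val = (i.val + 1) % (2*n+2) := by rw [ZMod.val_add, ZMod.val_one]
    rw [h1]
    exact hstep i.val (ZMod.val_lt i)
  have hub : ∀ (i : ZMod (2*n+2)) (k : ℕ),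
      wDist X (f i.val) (f (i + (k : ZMod (2*n+2))).val) ≤ k := by
    intro i k
    induction k with
    | zero => simp [wDist_self]
    | succ k ih =>
      have hc : i + ((k+1 : ℕ) : ZMod (2*n+2)) = (i + (k : ℕ)) + 1 := by
        push_cast
        ring
      have htri := wDist_triangle X hXgen (f i.val) (f (i + (k : ℕ)).val)
        (f ((i + (k : ℕ)) + 1).val)
      have hone := wDist_le_one X (hstep' (i + (k : ℕ)))
      rw [hc]
      omega
  have hub2 : ∀ i j : ZMod (2*n+2), wDist X (f i.val) (f j.val) ≤ (j - i).val := by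
    intro i j
    have := hub i (j - i).val
    have e : i + (j - i) = j := by ring
    rwa [hcast (j - i), e] at this
  have main : ∀ i j : ZMod (2*n+2), i.val < j.val →
      wDist X (f i.val) (f j.val) = min (i - j).val (j - i).val := by
    intro i j hij
    have hq : j.val < 2*n+2 := ZMod.val_lt j
    have hji : (j - i).val = j.val - i.val := by
      have e1 : j - i = ((j.val - i.val : ℕ) : ZMod (2*n+2)) := by
        rw [Nat.cast_sub hij.le, hcast, hcast]
      rw [e1, ZMod.val_cast_of_lt (by omega)]
    have hij' : (i - j).val = 2*n+2 - (j.val - i.val) := by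
      have e1 : i - j = ((i.val + (2*n+2) - j.val : ℕ) : ZMod (2*n+2)) := by
        rw [Nat.cast_sub (by omega), Nat.cast_add, ZMod.natCast_self, add_zero, hcast, hcast]
      rw [e1, ZMod.val_cast_of_lt (by omega)]
      omega
    have hlow := key i.val j.val hij.le (by omega)
    have hu1 := hub2 i j
    have hu2 := hub2 j i
    have hsd := wDist_symm X hXgen (f i.val) (f j.val)
    omega
  refine ⟨fun i => f i.val, fun i => hstep' i, fun i j => ?_⟩
  rcases lt_trichotomy i.val j.val with h | h | h
  · exact main i j h
  · have : i = j := by rw [← hcast i, ← hcast j, h]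
    subst this
    simp [wDist_self, sub_self, ZMod.val_zero]
  · rw [wDist_symm X hXgen, min_comm]
    exact main j i h
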